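/- For every school-choice instance and every student s, the joint-seat-allocation assignment equals the projection of the student-optimal stable matching of the JSA auxiliary instance: μ^JSA(s) = ω(μ^JSA-a(s)). -/

import Mathlib

/-!
Common formalization of school-choice instances with reserved seats
(minority reserve, joint seat allocation, discovery program).

Conventions:
* `prio c s` is the priority rank of student `s` at school `c`
  (smaller value = higher priority); injectivity encodes a strict priority order.
* `pref s o` is the preference rank of outcome `o : Option C` for student `s`
  (smaller value = more preferred); `none` denotes being unmatched, and a school
  `c` is acceptable to `s` iff `pref s (some c) < pref s none`.
-/

open Finset

structure SchoolChoice (S C : Type*) [Fintype S] [DecidableEq S] [Fintype C] [DecidableEq C] where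
  /-- the set of disadvantaged (minority) students; the rest are advantaged -/
  dis : Finset S
  /-- preference rank of each outcome (school or `none` = unmatched) for each student -/
  pref : S → Option C → ℕ
  pref_inj : ∀ s, Function.Injective (pref s)
  /-- priority rank of each student at each school (lower = higher priority) -/
  prio : C → S → ℕ
  prio_inj : ∀ c, Function.Injective (prio c)
  /-- quota of each school -/
  q : C → ℕ
  /-- reservation quota of each school -/
  qR : C → ℕ
  qR_le : ∀ c, qR c ≤ q c

namespace SchoolChoice

variable {S C : Type*} [Fintype S] [DecidableEq S] [Fintype C] [DecidableEq C]

/-- `max(T, >_c, k)`: the `min(k, |T|)` highest-priority students of `T` at school `c`. -/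
def maxSet (I : SchoolChoice S C) (c : C) (T : Finset S) (k : ℕ) : Finset S :=
  T.filter fun s => (T.filter fun t => I.prio c t < I.prio c s).card < k

/-- baseline choice function `C^BASE_c` -/
def CBASE (I : SchoolChoice S C) (c : C) (T : Finset S) : Finset S :=
  I.maxSet c T (I.q c)

/-- `S1^R` of the minority-reserve choice function -/
def mrRes (I : SchoolChoice S C) (c : C) (T : Finset S) : Finset S :=
  I.maxSet c (T ∩ I.dis) (I.qR c)

/-- minority-reserve choice function `C^MR_c` -/
def CMR (I : SchoolChoice S C) (c : C) (T : Finset S) : Finset S :=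
  I.mrRes c T ∪ I.maxSet c (T \ I.mrRes c T) (I.q c - (I.mrRes c T).card)

/-- `S1^G` of the joint-seat-allocation choice function -/
def jsaGen (I : SchoolChoice S C) (c : C) (T : Finset S) : Finset S :=
  I.maxSet c T (I.q c - I.qR c)

/-- `S1^R` of the joint-seat-allocation choice function -/
def jsaRes (I : SchoolChoice S C) (c : C) (T : Finset S) : Finset S :=
  I.maxSet c ((T ∩ I.dis) \ I.jsaGen c T) (I.qR c)

/-- joint-seat-allocation choice function `C^JSA_c` -/
def CJSA (I : SchoolChoice S C) (c : C) (T : Finset S) : Finset S :=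
  I.jsaGen c T ∪ I.jsaRes c T ∪
    I.maxSet c (T \ (I.jsaGen c T ∪ I.jsaRes c T))
      (I.q c - (I.jsaGen c T ∪ I.jsaRes c T).card)

/-- school `c` is acceptable to student `s` -/
def acceptable (I : SchoolChoice S C) (s : S) (c : C) : Prop :=
  I.pref s (some c) < I.pref s none

/-- `μ(c)`: the set of students assigned to school `c` by `μ` -/
def assigned (I : SchoolChoice S C) (μ : S → Option C) (c : C) : Finset S :=
  Finset.univ.filter fun s => μ s = some c

/-- `μ` is a matching: students are assigned only acceptable schools, quotas respected -/
def IsMatching (I : SchoolChoice S C) (μ : S → Option C) : Prop :=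
  (∀ s c, μ s = some c → I.acceptable s c) ∧ ∀ c, (I.assigned μ c).card ≤ I.q c

/-- `μ` is stable w.r.t. the choice functions `Ch`: it is a matching and no pair
`(s, c)` with `c` acceptable to `s` satisfies `c >_s μ(s)` and `s ∈ Ch c (μ(c) ∪ {s})`. -/
def IsStable (I : SchoolChoice S C) (Ch : C → Finset S → Finset S) (μ : S → Option C) : Prop :=
  I.IsMatching μ ∧
    ∀ s c, I.acceptable s c → I.pref s (some c) < I.pref s (μ s) →
      s ∉ Ch c (insert s (I.assigned μ c))

/-- `μ` is the student-optimal stable matching w.r.t. `Ch`: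
stable and weakly preferred by every student to every stable matching. -/
def IsOptStable (I : SchoolChoice S C) (Ch : C → Finset S → Finset S) (μ : S → Option C) :
    Prop :=
  I.IsStable Ch μ ∧ ∀ μ', I.IsStable Ch μ' → ∀ s, I.pref s (μ s) ≤ I.pref s (μ' s)

/-! Restricted (sub)instances, used by the three-stage discovery program: only students
in `A` participate and school `c` has quota `q' c`, with baseline (responsive) choice
functions. -/

def IsMatchingOn (I : SchoolChoice S C) (A : Finset S) (q' : C → ℕ) (μ : S → Option C) :
    Prop :=
  (∀ s, s ∉ A → μ s = none) ∧
    (∀ s c, μ s = some c → I.acceptable s c) ∧ ∀ c, (I.assigned μ c).card ≤ q' c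

def IsStableOn (I : SchoolChoice S C) (A : Finset S) (q' : C → ℕ) (μ : S → Option C) : Prop :=
  I.IsMatchingOn A q' μ ∧
    ∀ s ∈ A, ∀ c : C, I.acceptable s c → I.pref s (some c) < I.pref s (μ s) →
      s ∉ I.maxSet c (insert s (I.assigned μ c)) (q' c)

def IsOptStableOn (I : SchoolChoice S C) (A : Finset S) (q' : C → ℕ) (μ : S → Option C) :
    Prop :=
  I.IsStableOn A q' μ ∧
    ∀ μ', I.IsStableOn A q' μ' → ∀ s ∈ A, I.pref s (μ s) ≤ I.pref s (μ' s)

/-- `μ` is the discovery-program matching: the union of the three stage matchings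
`μ1` (general seats, all students), `μ2` (reserved seats, unmatched disadvantaged
students), `μ3` (vacant reserved seats, unmatched advantaged students). -/
def IsDisc (I : SchoolChoice S C) (μ : S → Option C) : Prop :=
  ∃ μ1 μ2 μ3 : S → Option C,
    I.IsOptStableOn Finset.univ (fun c => I.q c - I.qR c) μ1 ∧
    I.IsOptStableOn (I.dis.filter fun s => μ1 s = none) I.qR μ2 ∧
    I.IsOptStableOn ((Finset.univ \ I.dis).filter fun s => μ1 s = none)
      (fun c => I.qR c - (I.assigned μ2 c).card) μ3 ∧
    ∀ s, μ s = Option.elim (μ1 s) (Option.elim (μ2 s) (μ3 s) some) some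

/-- `(s, c)` is a blocking pair of `μ` for disadvantaged students -/
def BlockDis (I : SchoolChoice S C) (μ : S → Option C) (s : S) (c : C) : Prop :=
  s ∈ I.dis ∧ I.acceptable s c ∧ I.pref s (some c) < I.pref s (μ s) ∧
    ∃ s' ∈ I.assigned μ c, s' ∈ I.dis ∧ I.prio c s < I.prio c s'

/-- `(s, c)` is a blocking pair of `μ` for advantaged students -/
def BlockAdv (I : SchoolChoice S C) (μ : S → Option C) (s : S) (c : C) : Prop :=
  s ∉ I.dis ∧ I.acceptable s c ∧ I.pref s (some c) < I.pref s (μ s) ∧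
    ∃ s' ∈ I.assigned μ c, s' ∉ I.dis ∧ I.prio c s < I.prio c s'

/-- `(s, c)` is an in-group blocking pair of `μ` -/
def InGroupBlock (I : SchoolChoice S C) (μ : S → Option C) (s : S) (c : C) : Prop :=
  I.BlockDis μ s c ∨ I.BlockAdv μ s c

/-- all schools share a common priority order over the students -/
def CommonPriority (I : SchoolChoice S C) : Prop :=
  ∀ c c' : C, ∀ t u : S, I.prio c t < I.prio c u ↔ I.prio c' t < I.prio c' u

/-- the reservation quotas are a smart reserve w.r.t. the baseline matching `μBase` -/
def SmartReserve (I : SchoolChoice S C) (μBase : S → Option C) : Prop :=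
  ∀ c, (I.assigned μBase c ∩ I.dis).card ≤ I.qR c

end SchoolChoice
namespace SchoolChoice

variable {S C : Type*} [Fintype S] [DecidableEq S] [Fintype C] [DecidableEq C]

/-! Auxiliary instances: each school `c` is split into `Sum.inl c = c'` (general seats,
quota `q c - qR c`, priority `>_c`) and `Sum.inr c = c''` (reserved seats, quota `qR c`,
priority ranking all disadvantaged students above all advantaged students and each group
by `>_c`). The projection `ω` is `Sum.elim id id`. -/

/-- priority ranks of the auxiliary schools -/
def prioAux (I : SchoolChoice S C) : C ⊕ C → S → ℕ
  | Sum.inl c => I.prio c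
  | Sum.inr c => fun t =>
      if t ∈ I.dis then I.prio c t else Finset.univ.sup (I.prio c) + 1 + I.prio c t

theorem prioAux_inj (I : SchoolChoice S C) (d : C ⊕ C) :
    Function.Injective (I.prioAux d) := by
  cases d with
  | inl c => exact I.prio_inj c
  | inr c =>
    intro t u h
    simp only [prioAux] at h
    have ht := Finset.le_sup (f := I.prio c) (Finset.mem_univ t)
    have hu := Finset.le_sup (f := I.prio c) (Finset.mem_univ u)
    split_ifs at h
    · exact I.prio_inj c h
    · exact absurd h (by omega)
    · exact absurd h (by omega)
    · exact I.prio_inj c (by omega)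

/-- JSA auxiliary preferences: `c1' > c1'' > c2' > c2'' > ⋯` -/
def prefJSAAux (I : SchoolChoice S C) (s : S) : Option (C ⊕ C) → ℕ
  | none => 2 * I.pref s none
  | some (Sum.inl c) => 2 * I.pref s (some c)
  | some (Sum.inr c) => 2 * I.pref s (some c) + 1

theorem prefJSAAux_inj (I : SchoolChoice S C) (s : S) :
    Function.Injective (I.prefJSAAux s) := by
  intro o1 o2 h
  rcases o1 with _ | (c1 | c1) <;> rcases o2 with _ | (c2 | c2) <;>
    simp only [prefJSAAux] at h
  · rfl
  · exact (Option.some_ne_none c2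
      (I.pref_inj s (show I.pref s none = I.pref s (some c2) by omega)).symm).elim
  · exact absurd h (by omega)
  · exact (Option.some_ne_none c1
      (I.pref_inj s (show I.pref s (some c1) = I.pref s none by omega))).elim
  · rw [Option.some.inj
      (I.pref_inj s (show I.pref s (some c1) = I.pref s (some c2) by omega))]
  · exact absurd h (by omega)
  · exact absurd h (by omega)
  · exact absurd h (by omega)
  · rw [Option.some.inj
      (I.pref_inj s (show I.pref s (some c1) = I.pref s (some c2) by omega))]

/-- a bound strictly larger than all preference ranks of student `s` -/
def prefB (I : SchoolChoice S C) (s : S) : ℕ := Finset.univ.sup (I.pref s) + 1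

/-- DISC auxiliary preferences: `c1' > ⋯ > ck' > c1'' > ⋯ > ck''`
(acceptable general copies first, then acceptable reserved copies, then being
unmatched, then the copies of unacceptable schools). -/
def prefDISCAux (I : SchoolChoice S C) (s : S) : Option (C ⊕ C) → ℕ
  | none => 2 * I.prefB s
  | some (Sum.inl c) =>
      if I.pref s (some c) < I.pref s none then I.pref s (some c)
      else 2 * I.prefB s + 1 + I.pref s (some c)
  | some (Sum.inr c) =>
      if I.pref s (some c) < I.pref s none then I.prefB s + I.pref s (some c)
      else 3 * I.prefB s + 1 + I.pref s (some c)

theorem prefDISCAux_inj (I : SchoolChoice S C) (s : S) :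
    Function.Injective (I.prefDISCAux s) := by
  have hb : ∀ o : Option C, I.pref s o < I.prefB s := by
    intro o
    have := Finset.le_sup (f := I.pref s) (Finset.mem_univ o)
    simp only [prefB]
    omega
  intro o1 o2 h
  have hn := hb none
  rcases o1 with _ | (c1 | c1) <;> rcases o2 with _ | (c2 | c2) <;>
    simp only [prefDISCAux] at h <;> try split_ifs at h
  all_goals try rfl
  all_goals
    first
    | exact absurd h (by first
        | (have := hb (some c1); have := hb (some c2); omega)
        | (have := hb (some c1); omega)
        | (have := hb (some c2); omega))
    | rw [Option.some.inj (I.pref_inj s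
        (show I.pref s (some c1) = I.pref s (some c2) by
          have := hb (some c1); have := hb (some c2); omega))]

/-- the JSA auxiliary instance -/
def jsaAux (I : SchoolChoice S C) : SchoolChoice S (C ⊕ C) where
  dis := I.dis
  pref := I.prefJSAAux
  pref_inj := I.prefJSAAux_inj
  prio := I.prioAux
  prio_inj := I.prioAux_inj
  q := Sum.elim (fun c => I.q c - I.qR c) I.qR
  qR := fun _ => 0
  qR_le := fun _ => Nat.zero_le _

/-- the DISC auxiliary instance -/
def discAux (I : SchoolChoice S C) : SchoolChoice S (C ⊕ C) :=
  { I.jsaAux with pref := I.prefDISCAux, pref_inj := I.prefDISCAux_inj }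

/-- `ψ⁻¹`: transform a matching of the original instance into a matching of the
JSA auxiliary instance: `μ2(c') = max(μ1(c), >_c, q_c^G)`, `μ2(c'') = μ1(c) \ μ2(c')`. -/
def psiInv (I : SchoolChoice S C) (μ : S → Option C) (s : S) : Option (C ⊕ C) :=
  match μ s with
  | none => none
  | some c =>
      if s ∈ I.maxSet c (I.assigned μ c) (I.q c - I.qR c) then some (Sum.inl c)
      else some (Sum.inr c)

end SchoolChoice
namespace SchoolChoice

variable {S C : Type*} [Fintype S] [DecidableEq S] [Fintype C] [DecidableEq C]
variable {I : SchoolChoice S C}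

lemma mem_maxSet {c : C} {T : Finset S} {k : ℕ} {s : S} :
    s ∈ I.maxSet c T k ↔ s ∈ T ∧ (T.filter fun t => I.prio c t < I.prio c s).card < k :=
  Finset.mem_filter

lemma maxSet_subset {c : C} {T : Finset S} {k : ℕ} : I.maxSet c T k ⊆ T :=
  Finset.filter_subset _ _

lemma not_mem_maxSet {c : C} {T : Finset S} {k : ℕ} {s : S}
    (h : k ≤ (T.filter fun t => I.prio c t < I.prio c s).card) : s ∉ I.maxSet c T k := by
  intro hm
  exact absurd (mem_maxSet.mp hm).2 (by omega)

lemma card_le_of_not_mem_maxSet {c : C} {T : Finset S} {k : ℕ} {s : S}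
    (hs : s ∈ T) (h : s ∉ I.maxSet c T k) :
    k ≤ (T.filter fun t => I.prio c t < I.prio c s).card := by
  by_contra h'
  exact h (mem_maxSet.mpr ⟨hs, by omega⟩)

lemma filter_insert_self {c : C} {A : Finset S} {s : S} :
    ((insert s A).filter fun t => I.prio c t < I.prio c s)
      = A.filter fun t => I.prio c t < I.prio c s := by
  rw [Finset.filter_insert, if_neg (by simp)]

lemma rank_lt {c : C} {T : Finset S} {a b : S} (ha : a ∈ T) (hab : I.prio c a < I.prio c b) :
    (T.filter fun t => I.prio c t < I.prio c a).card <
    (T.filter fun t => I.prio c t < I.prio c b).card := by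
  apply Finset.card_lt_card
  constructor
  · intro t ht
    rw [Finset.mem_filter] at ht ⊢
    exact ⟨ht.1, ht.2.trans hab⟩
  · intro hsub
    have := hsub (Finset.mem_filter.mpr ⟨ha, hab⟩)
    simp at this

lemma rank_injOn (I : SchoolChoice S C) (c : C) (T : Finset S) :
    Set.InjOn (fun s => (T.filter fun t => I.prio c t < I.prio c s).card) T := by
  intro a ha b hb h
  by_contra hne
  rcases lt_or_gt_of_ne (fun h' : I.prio c a = I.prio c b => hne (I.prio_inj c h')) with hlt | hlt
  · exact absurd h (Nat.ne_of_lt (rank_lt ha hlt))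
  · exact absurd h.symm (Nat.ne_of_lt (rank_lt hb hlt))

lemma rank_lt_card {c : C} {T : Finset S} {t : S} (ht : t ∈ T) :
    (T.filter fun u => I.prio c u < I.prio c t).card < T.card := by
  apply Finset.card_lt_card
  constructor
  · exact Finset.filter_subset _ _
  · intro hsub
    have := hsub ht
    simp at this

lemma card_maxSet_le {c : C} {T : Finset S} {k : ℕ} : (I.maxSet c T k).card ≤ k := by
  have := Finset.card_le_card_of_injOn
    (f := fun s => (T.filter fun t => I.prio c t < I.prio c s).card)
    (s := I.maxSet c T k) (t := Finset.range k)
    (fun a ha => Finset.mem_range.mpr (mem_maxSet.mp ha).2)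
    ((rank_injOn I c T).mono (fun x hx => maxSet_subset hx))
  simpa using this

lemma le_card_maxSet {c : C} {T : Finset S} {k : ℕ} (h : k ≤ T.card) :
    k ≤ (I.maxSet c T k).card := by
  classical
  set f : S → ℕ := fun s => (T.filter fun t => I.prio c t < I.prio c s).card with hf
  have himg : T.image f = Finset.range T.card := by
    apply Finset.eq_of_subset_of_card_le
    · intro x hx
      rw [Finset.mem_image] at hx
      obtain ⟨a, ha, rfl⟩ := hx
      exact Finset.mem_range.mpr (rank_lt_card ha)
    · rw [Finset.card_range, Finset.card_image_of_injOn (rank_injOn I c T)]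
  have hsurj : ∀ j, j < k → ∃ a ∈ T, f a = j := by
    intro j hj
    have : j ∈ T.image f := by
      rw [himg, Finset.mem_range]; omega
    rw [Finset.mem_image] at this
    exact this
  have : Finset.range k ⊆ (I.maxSet c T k).image f := by
    intro j hj
    rw [Finset.mem_range] at hj
    obtain ⟨a, ha, hfa⟩ := hsurj j hj
    exact Finset.mem_image.mpr ⟨a, mem_maxSet.mpr ⟨ha, by simp only [hf] at hfa; rw [hfa]; omega⟩, hfa⟩
  calc k = (Finset.range k).card := (Finset.card_range k).symm
    _ ≤ ((I.maxSet c T k).image f).card := Finset.card_le_card this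
    _ ≤ (I.maxSet c T k).card := Finset.card_image_le

lemma maxSet_eq_self {c : C} {T : Finset S} {k : ℕ} (h : T.card ≤ k) :
    I.maxSet c T k = T := by
  apply Finset.filter_true_of_mem
  intro t ht
  have := rank_lt_card (I := I) (c := c) ht
  omega

/-- if at least `k` members of `T` beat `s`, then at least `k` members of the
top-`k` set of `T` beat `s`. -/
lemma filter_maxSet_ge {c : C} {T : Finset S} {k : ℕ} {x : ℕ}
    (hk : k ≤ (T.filter fun t => I.prio c t < x).card) :
    k ≤ ((I.maxSet c T k).filter fun t => I.prio c t < x).card := by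
  classical
  set B := T.filter fun t => I.prio c t < x with hB
  have hsub : I.maxSet c B k ⊆ (I.maxSet c T k).filter fun t => I.prio c t < x := by
    intro t ht
    obtain ⟨htB, hcard⟩ := mem_maxSet.mp ht
    rw [hB, Finset.mem_filter] at htB
    have heq : (T.filter fun u => I.prio c u < I.prio c t)
        = B.filter fun u => I.prio c u < I.prio c t := by
      rw [hB, Finset.filter_filter]
      apply Finset.filter_congr
      intro u hu
      constructor
      · intro h'; exact ⟨h'.trans htB.2, h'⟩
      · intro h'; exact h'.2
    refine Finset.mem_filter.mpr ⟨mem_maxSet.mpr ⟨htB.1, ?_⟩, htB.2⟩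
    rw [heq]
    exact hcard
  calc k ≤ (I.maxSet c B k).card := le_card_maxSet hk
    _ ≤ _ := Finset.card_le_card hsub

/-- if `B ⊆ T` has exactly `k` members and every member of `B` beats every member of
`T \ B`, then `B` is the top-`k` set of `T`. -/
lemma maxSet_eq_of_beats {c : C} {T B : Finset S} {k : ℕ} (hBT : B ⊆ T) (hcard : B.card = k)
    (hbeat : ∀ b ∈ B, ∀ t ∈ T, t ∉ B → I.prio c b < I.prio c t) :
    I.maxSet c T k = B := by
  apply Finset.Subset.antisymm
  · intro t ht
    obtain ⟨htT, hlt⟩ := mem_maxSet.mp ht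
    by_contra htB
    have : B ⊆ T.filter fun u => I.prio c u < I.prio c t := by
      intro b hb
      exact Finset.mem_filter.mpr ⟨hBT hb, hbeat b hb t htT htB⟩
    have := Finset.card_le_card this
    omega
  · intro b hb
    refine mem_maxSet.mpr ⟨hBT hb, ?_⟩
    have hsub : (T.filter fun u => I.prio c u < I.prio c b) ⊆ B.erase b := by
      intro u hu
      obtain ⟨huT, hult⟩ := Finset.mem_filter.mp hu
      have huB : u ∈ B := by
        by_contra huB
        exact absurd hult (by have := hbeat b hb u huT huB; omega)
      refine Finset.mem_erase.mpr ⟨?_, huB⟩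
      intro h; rw [h] at hult; omega
    have h1 := Finset.card_le_card hsub
    have h2 := Finset.card_erase_of_mem hb
    have h3 : 1 ≤ B.card := Finset.card_pos.mpr ⟨b, hb⟩
    omega

/-- consequence of stability: the assigned set is full and everyone in it beats `s`. -/
lemma all_beat_of_stab {c : C} {A : Finset S} {k : ℕ} {s : S} (hA : A.card ≤ k)
    (h : s ∉ I.maxSet c (insert s A) k) :
    A.card = k ∧ ∀ t ∈ A, I.prio c t < I.prio c s := by
  have h1 : k ≤ (A.filter fun t => I.prio c t < I.prio c s).card := by
    have := card_le_of_not_mem_maxSet (Finset.mem_insert_self s A) h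
    rwa [filter_insert_self] at this
  have hsub := A.filter_subset (fun t => I.prio c t < I.prio c s)
  have hfc : (A.filter fun t => I.prio c t < I.prio c s).card ≤ A.card :=
    Finset.card_le_card hsub
  have heq : A.filter (fun t => I.prio c t < I.prio c s) = A :=
    Finset.eq_of_subset_of_card_le hsub (by omega)
  refine ⟨by omega, fun t ht => ?_⟩
  rw [← heq] at ht
  exact (Finset.mem_filter.mp ht).2

/-! unfolding lemmas for the auxiliary instance -/

lemma jsaAux_prio_inl (I : SchoolChoice S C) (c : C) :
    I.jsaAux.prio (Sum.inl c) = I.prio c := rfl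

lemma jsaAux_prio_inr (I : SchoolChoice S C) (c : C) (t : S) :
    I.jsaAux.prio (Sum.inr c) t =
      if t ∈ I.dis then I.prio c t else Finset.univ.sup (I.prio c) + 1 + I.prio c t := rfl

lemma jsaAux_q_inl (I : SchoolChoice S C) (c : C) :
    I.jsaAux.q (Sum.inl c) = I.q c - I.qR c := rfl

lemma jsaAux_q_inr (I : SchoolChoice S C) (c : C) : I.jsaAux.q (Sum.inr c) = I.qR c := rfl

lemma jsaAux_dis (I : SchoolChoice S C) : I.jsaAux.dis = I.dis := rfl

lemma jsaAux_pref_none (I : SchoolChoice S C) (s : S) :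
    I.jsaAux.pref s none = 2 * I.pref s none := rfl

lemma jsaAux_pref_inl (I : SchoolChoice S C) (s : S) (c : C) :
    I.jsaAux.pref s (some (Sum.inl c)) = 2 * I.pref s (some c) := rfl

lemma jsaAux_pref_inr (I : SchoolChoice S C) (s : S) (c : C) :
    I.jsaAux.pref s (some (Sum.inr c)) = 2 * I.pref s (some c) + 1 := rfl

lemma mem_assigned {μ : S → Option C} {c : C} {s : S} :
    s ∈ I.assigned μ c ↔ μ s = some c := by
  simp [assigned]

lemma assigned_proj (I : SchoolChoice S C) (μA : S → Option (C ⊕ C)) (c : C) :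
    I.assigned (fun s => (μA s).map (Sum.elim id id)) c
      = I.jsaAux.assigned μA (Sum.inl c) ∪ I.jsaAux.assigned μA (Sum.inr c) := by
  ext s
  rw [Finset.mem_union, mem_assigned, mem_assigned, mem_assigned]
  rcases h : μA s with _ | (a | b) <;> simp [h]

lemma assigned_disjoint (I : SchoolChoice S C) (μA : S → Option (C ⊕ C)) (c : C) :
    Disjoint (I.jsaAux.assigned μA (Sum.inl c)) (I.jsaAux.assigned μA (Sum.inr c)) := by
  rw [Finset.disjoint_left]
  intro a h1 h2
  rw [mem_assigned] at h1 h2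
  rw [h1] at h2
  simp at h2

lemma prio_le_sup (I : SchoolChoice S C) (c : C) (t : S) :
    I.prio c t ≤ Finset.univ.sup (I.prio c) :=
  Finset.le_sup (Finset.mem_univ t)

end SchoolChoice
namespace SchoolChoice

variable {S C : Type*} [Fintype S] [DecidableEq S] [Fintype C] [DecidableEq C]

lemma isStable_proj (I : SchoolChoice S C) {μA : S → Option (C ⊕ C)}
    (h : I.jsaAux.IsStable I.jsaAux.CBASE μA) :
    I.IsStable I.CJSA (fun s => (μA s).map (Sum.elim id id)) := by
  obtain ⟨⟨hacc, hq⟩, hstab⟩ := h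
  refine ⟨⟨?_, ?_⟩, ?_⟩
  · -- acceptability
    intro s c hc
    replace hc : Option.map (Sum.elim id id) (μA s) = some c := hc
    rcases hm : μA s with _ | (a | b) <;> rw [hm] at hc <;> simp at hc
    · subst hc
      have := hacc s _ hm
      simp only [acceptable, jsaAux_pref_inl, jsaAux_pref_none] at this ⊢
      omega
    · subst hc
      have := hacc s _ hm
      simp only [acceptable, jsaAux_pref_inr, jsaAux_pref_none] at this ⊢
      omega
  · -- quotas
    intro c
    rw [assigned_proj]
    have h1 := hq (Sum.inl c)
    have h2 := hq (Sum.inr c)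
    rw [jsaAux_q_inl] at h1
    rw [jsaAux_q_inr] at h2
    have h3 := Finset.card_union_le (I.jsaAux.assigned μA (Sum.inl c))
      (I.jsaAux.assigned μA (Sum.inr c))
    have h4 := I.qR_le c
    omega
  · -- no blocking pair
    intro s c hc hpref hmem
    simp only [] at hpref hmem
    rw [assigned_proj] at hmem
    set G := I.jsaAux.assigned μA (Sum.inl c) with hGdef
    set R := I.jsaAux.assigned μA (Sum.inr c) with hRdef
    set T := insert s (G ∪ R) with hTdef
    simp only [acceptable] at hc
    have hsG : s ∉ G := by
      intro h
      rw [hGdef, mem_assigned] at h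
      rw [h] at hpref
      simp at hpref
    have hsR : s ∉ R := by
      intro h
      rw [hRdef, mem_assigned] at h
      rw [h] at hpref
      simp at hpref
    have hdisj : ∀ t ∈ R, t ∉ G :=
      fun t ht hg => (Finset.disjoint_left.mp (assigned_disjoint I μA c)) hg ht
    -- stability at (s, inl c)
    have hacc1 : I.jsaAux.acceptable s (Sum.inl c) := by
      simp only [acceptable, jsaAux_pref_inl, jsaAux_pref_none]
      omega
    have hpref1 : I.jsaAux.pref s (some (Sum.inl c)) < I.jsaAux.pref s (μA s) := by
      rcases hm : μA s with _ | (a | b) <;> rw [hm] at hpref <;> simp at hpref <;>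
        simp only [jsaAux_pref_inl, jsaAux_pref_none, jsaAux_pref_inr] <;> omega
    have hq1 := hq (Sum.inl c)
    rw [jsaAux_q_inl] at hq1
    have hst1 := hstab s (Sum.inl c) hacc1 hpref1
    simp only [CBASE, jsaAux_q_inl] at hst1
    obtain ⟨hGcard, hGbeat⟩ := all_beat_of_stab (I := I.jsaAux) hq1 hst1
    simp only [jsaAux_prio_inl] at hGbeat
    -- stability at (s, inr c)
    have hacc2 : I.jsaAux.acceptable s (Sum.inr c) := by
      simp only [acceptable, jsaAux_pref_inr, jsaAux_pref_none]
      omega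
    have hpref2 : I.jsaAux.pref s (some (Sum.inr c)) < I.jsaAux.pref s (μA s) := by
      rcases hm : μA s with _ | (a | b) <;> rw [hm] at hpref <;> simp at hpref <;>
        simp only [jsaAux_pref_inl, jsaAux_pref_none, jsaAux_pref_inr] <;> omega
    have hq2 := hq (Sum.inr c)
    rw [jsaAux_q_inr] at hq2
    have hst2 := hstab s (Sum.inr c) hacc2 hpref2
    simp only [CBASE, jsaAux_q_inr] at hst2
    obtain ⟨hRcard, hRbeat⟩ := all_beat_of_stab (I := I.jsaAux) hq2 hst2
    -- every member of G beats every member of R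
    have hGR : ∀ r ∈ R, ∀ g ∈ G, I.prio c g < I.prio c r := by
      intro r hr
      have hrm : μA r = some (Sum.inr c) := mem_assigned.mp hr
      have haccr := hacc r (Sum.inr c) hrm
      simp only [acceptable, jsaAux_pref_inr, jsaAux_pref_none] at haccr
      have haccr1 : I.jsaAux.acceptable r (Sum.inl c) := by
        simp only [acceptable, jsaAux_pref_inl, jsaAux_pref_none]
        omega
      have hprefr : I.jsaAux.pref r (some (Sum.inl c)) < I.jsaAux.pref r (μA r) := by
        rw [hrm]
        simp only [jsaAux_pref_inl, jsaAux_pref_inr]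
        omega
      have hstr := hstab r (Sum.inl c) haccr1 hprefr
      simp only [CBASE, jsaAux_q_inl] at hstr
      obtain ⟨_, hb⟩ := all_beat_of_stab (I := I.jsaAux) hq1 hstr
      simp only [jsaAux_prio_inl] at hb
      exact fun g hg => hb g hg
    -- the general-seat stage selects exactly G
    have hGsub : G ⊆ T := fun t ht => Finset.mem_insert.mpr (Or.inr (Finset.mem_union_left _ ht))
    have hRsub : R ⊆ T := fun t ht => Finset.mem_insert.mpr (Or.inr (Finset.mem_union_right _ ht))
    have hGn : I.jsaGen c T = G := by
      apply maxSet_eq_of_beats hGsub hGcard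
      intro b hb t ht htB
      rcases Finset.mem_insert.mp ht with rfl | htGR
      · exact hGbeat b hb
      · rcases Finset.mem_union.mp htGR with h | h
        · exact absurd h htB
        · exact hGR t h b hb
    set U := (T ∩ I.dis) \ G with hUdef
    set Rn := I.maxSet c U (I.qR c) with hRndef
    have hRes : I.jsaRes c T = Rn := by
      rw [jsaRes, hGn]
    have hRnU : Rn ⊆ U := maxSet_subset
    have hdisjGRn : Disjoint G Rn := by
      rw [Finset.disjoint_left]
      intro a haG haRn
      exact (Finset.mem_sdiff.mp (hRnU haRn)).2 haG
    simp only [CJSA, hGn, hRes] at hmem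
    by_cases hsdis : s ∈ I.dis
    · -- s is disadvantaged: every member of R is disadvantaged and beats s
      have hRd : ∀ t ∈ R, t ∈ I.dis ∧ I.prio c t < I.prio c s := by
        intro t ht
        have h5 := hRbeat t ht
        rw [jsaAux_prio_inr, jsaAux_prio_inr, if_pos hsdis] at h5
        by_cases htd : t ∈ I.dis
        · rw [if_pos htd] at h5
          exact ⟨htd, h5⟩
        · rw [if_neg htd] at h5
          have h6 := prio_le_sup I c s
          omega
      have hRU : R ⊆ U.filter fun t => I.prio c t < I.prio c s := by
        intro t ht
        exact Finset.mem_filter.mpr ⟨Finset.mem_sdiff.mpr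
          ⟨Finset.mem_inter.mpr ⟨hRsub ht, (hRd t ht).1⟩, hdisj t ht⟩, (hRd t ht).2⟩
      have hRU' : R ⊆ U := fun t ht => (Finset.mem_filter.mp (hRU ht)).1
      have hRncard : Rn.card = I.qR c := by
        have h7 : I.qR c ≤ U.card := hRcard ▸ Finset.card_le_card hRU'
        have h8 := le_card_maxSet (I := I) (c := c) (T := U) h7
        have h9 := card_maxSet_le (I := I) (c := c) (T := U) (k := I.qR c)
        rw [hRndef]
        omega
      rcases Finset.mem_union.mp hmem with hmem' | hmem'
      · rcases Finset.mem_union.mp hmem' with h' | h'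
        · exact hsG h'
        · refine not_mem_maxSet ?_ h'
          calc I.qR c = R.card := hRcard.symm
            _ ≤ _ := Finset.card_le_card hRU
      · have hcardGRn : (G ∪ Rn).card = I.q c := by
          rw [Finset.card_union_of_disjoint hdisjGRn, hGcard, hRncard]
          have := I.qR_le c
          omega
        rw [hcardGRn] at hmem'
        have := (mem_maxSet.mp hmem').2
        omega
    · -- s is advantaged
      have hRb : ∀ t ∈ R, t ∉ I.dis → I.prio c t < I.prio c s := by
        intro t ht htd
        have h5 := hRbeat t ht
        rw [jsaAux_prio_inr, jsaAux_prio_inr, if_neg hsdis, if_neg htd] at h5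
        omega
      set Rd := R.filter (fun t => t ∈ I.dis) with hRddef
      set Ra := R.filter (fun t => t ∉ I.dis) with hRadef
      have hU : U = Rd := by
        ext t
        constructor
        · intro ht
          obtain ⟨hti, htG⟩ := Finset.mem_sdiff.mp ht
          obtain ⟨htT, htd⟩ := Finset.mem_inter.mp hti
          rcases Finset.mem_insert.mp htT with rfl | h'
          · exact absurd htd hsdis
          · rcases Finset.mem_union.mp h' with h' | h'
            · exact absurd h' htG
            · exact Finset.mem_filter.mpr ⟨h', htd⟩
        · intro ht
          obtain ⟨htR, htd⟩ := Finset.mem_filter.mp ht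
          exact Finset.mem_sdiff.mpr
            ⟨Finset.mem_inter.mpr ⟨hRsub htR, htd⟩, hdisj t htR⟩
      have hRdcard : Rd.card ≤ I.qR c := by
        calc Rd.card ≤ R.card := Finset.card_le_card (Finset.filter_subset _ _)
          _ = I.qR c := hRcard
      have hRn : Rn = Rd := by
        rw [hRndef, hU]
        exact maxSet_eq_self (by omega)
      have hsplit : Rd.card + Ra.card = R.card := by
        have := Finset.card_filter_add_card_filter_not
          (s := R) (p := fun t => t ∈ I.dis)
        rw [← hRddef] at this
        rw [show (R.filter fun t => ¬ t ∈ I.dis) = Ra from hRadef.symm] at this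
        exact this
      rcases Finset.mem_union.mp hmem with hmem' | hmem'
      · rcases Finset.mem_union.mp hmem' with h' | h'
        · exact hsG h'
        · rw [hRn] at h'
          exact hsR (Finset.filter_subset _ _ h')
      · -- third stage
        rw [hRn] at hmem'
        refine not_mem_maxSet ?_ hmem'
        have hsub3 : Ra ⊆ (T \ (G ∪ Rd)).filter fun t => I.prio c t < I.prio c s := by
          intro t ht
          obtain ⟨htR, htd⟩ := Finset.mem_filter.mp ht
          refine Finset.mem_filter.mpr ⟨Finset.mem_sdiff.mpr ⟨hRsub htR, ?_⟩, hRb t htR htd⟩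
          intro hmem''
          rcases Finset.mem_union.mp hmem'' with h' | h'
          · exact hdisj t htR h'
          · exact htd (Finset.mem_filter.mp h').2
        have h10 := Finset.card_le_card hsub3
        have hdisjGRd : Disjoint G Rd := by
          rw [Finset.disjoint_left]
          intro a haG haRd
          exact hdisj a (Finset.filter_subset _ _ haRd) haG
        rw [Finset.card_union_of_disjoint hdisjGRd, hGcard]
        have h11 := I.qR_le c
        have h12 : Rd.card + Ra.card = I.qR c := by rw [← hRcard]; exact hsplit
        omega

end SchoolChoice
namespace SchoolChoice

variable {S C : Type*} [Fintype S] [DecidableEq S] [Fintype C] [DecidableEq C]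
variable {I : SchoolChoice S C}

lemma psiInv_none {μ : S → Option C} {s : S} (h : μ s = none) : I.psiInv μ s = none := by
  unfold psiInv
  rw [h]

lemma psiInv_some {μ : S → Option C} {s : S} {c : C} (h : μ s = some c) :
    I.psiInv μ s = if s ∈ I.maxSet c (I.assigned μ c) (I.q c - I.qR c)
      then some (Sum.inl c) else some (Sum.inr c) := by
  unfold psiInv
  rw [h]

lemma assigned_psiInv_inl (I : SchoolChoice S C) (μ : S → Option C) (c : C) :
    I.jsaAux.assigned (I.psiInv μ) (Sum.inl c)
      = I.maxSet c (I.assigned μ c) (I.q c - I.qR c) := by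
  ext s
  rw [mem_assigned]
  constructor
  · intro h
    rcases hm : μ s with _ | c₀
    · rw [psiInv_none hm] at h
      simp at h
    · rw [psiInv_some hm] at h
      split_ifs at h with hg
      · obtain rfl : c₀ = c := Sum.inl.inj (Option.some.inj h)
        exact hg
      · simp at h
  · intro h
    have hs : μ s = some c := mem_assigned.mp (maxSet_subset h)
    rw [psiInv_some hs, if_pos h]

lemma assigned_psiInv_inr (I : SchoolChoice S C) (μ : S → Option C) (c : C) :
    I.jsaAux.assigned (I.psiInv μ) (Sum.inr c)
      = I.assigned μ c \ I.maxSet c (I.assigned μ c) (I.q c - I.qR c) := by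
  ext s
  rw [mem_assigned, Finset.mem_sdiff, mem_assigned]
  constructor
  · intro h
    rcases hm : μ s with _ | c₀
    · rw [psiInv_none hm] at h
      simp at h
    · rw [psiInv_some hm] at h
      split_ifs at h with hg
      · simp at h
      · obtain rfl : c₀ = c := Sum.inr.inj (Option.some.inj h)
        exact ⟨rfl, hg⟩
  · rintro ⟨hm, hg⟩
    rw [psiInv_some hm, if_neg hg]

end SchoolChoice
namespace SchoolChoice

variable {S C : Type*} [Fintype S] [DecidableEq S] [Fintype C] [DecidableEq C]

lemma isStable_psiInv (I : SchoolChoice S C) {μ : S → Option C}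
    (h : I.IsStable I.CJSA μ) :
    I.jsaAux.IsStable I.jsaAux.CBASE (I.psiInv μ) := by
  obtain ⟨⟨hacc, hq⟩, hstab⟩ := h
  refine ⟨⟨?_, ?_⟩, ?_⟩
  · -- acceptability
    intro s d hd
    rcases hm : μ s with _ | c
    · rw [psiInv_none hm] at hd
      simp at hd
    · have haccs := hacc s c hm
      simp only [acceptable] at haccs
      rw [psiInv_some hm] at hd
      split_ifs at hd with hg <;> rw [← Option.some.inj hd] <;>
        simp only [acceptable, jsaAux_pref_inl, jsaAux_pref_inr, jsaAux_pref_none] <;> omega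
  · -- quotas
    intro d
    rcases d with c | c
    · rw [assigned_psiInv_inl, jsaAux_q_inl]
      exact card_maxSet_le
    · rw [assigned_psiInv_inr, jsaAux_q_inr]
      have hsub : I.maxSet c (I.assigned μ c) (I.q c - I.qR c) ⊆ I.assigned μ c :=
        maxSet_subset
      have hcs := Finset.card_sdiff_of_subset hsub
      have hqc := hq c
      have hqr := I.qR_le c
      by_cases hle : (I.assigned μ c).card ≤ I.q c - I.qR c
      · rw [maxSet_eq_self hle, Finset.sdiff_self]
        simp
      · have h1 : I.q c - I.qR c ≤ (I.maxSet c (I.assigned μ c) (I.q c - I.qR c)).card :=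
          le_card_maxSet (by omega)
        omega
  · -- no blocking pair
    intro s d haccd hprefd hmem
    simp only [CBASE] at hmem
    rcases d with c | c
    · -- d = inl c
      rw [assigned_psiInv_inl, jsaAux_q_inl] at hmem
      have haccs : I.acceptable s c := by
        simp only [acceptable, jsaAux_pref_inl, jsaAux_pref_none] at haccd
        simp only [acceptable]
        omega
      have hlt : ((I.maxSet c (I.assigned μ c) (I.q c - I.qR c)).filter
          fun t => I.prio c t < I.prio c s).card < I.q c - I.qR c := by
        have h1 := (mem_maxSet.mp hmem).2
        rw [filter_insert_self (I := I.jsaAux)] at h1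
        exact h1
      by_cases hcase : μ s = some c ∧ s ∉ I.maxSet c (I.assigned μ c) (I.q c - I.qR c)
      · obtain ⟨hm, hsg⟩ := hcase
        have hsA : s ∈ I.assigned μ c := mem_assigned.mpr hm
        have h2 : I.q c - I.qR c ≤ ((I.assigned μ c).filter
            fun t => I.prio c t < I.prio c s).card :=
          card_le_of_not_mem_maxSet hsA hsg
        have h3 := filter_maxSet_ge (I := I) (c := c) (x := I.prio c s) h2
        omega
      · -- s strictly prefers c to its JSA school
        have hplt : I.pref s (some c) < I.pref s (μ s) := by
          rcases hm : μ s with _ | c₀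
          · rw [psiInv_none hm] at hprefd
            simp only [jsaAux_pref_inl, jsaAux_pref_none] at hprefd
            omega
          · rw [psiInv_some hm] at hprefd
            split_ifs at hprefd with hg
            · simp only [jsaAux_pref_inl] at hprefd
              omega
            · simp only [jsaAux_pref_inl, jsaAux_pref_inr] at hprefd
              have hne : c ≠ c₀ := by
                intro heq
                subst heq
                exact hcase ⟨hm, hg⟩
              have hne' : I.pref s (some c) ≠ I.pref s (some c₀) :=
                fun hEq => hne (Option.some.inj (I.pref_inj s hEq))
              omega
        have hs' := hstab s c haccs hplt
        have hsA : s ∉ I.assigned μ c := by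
          intro hs
          rw [mem_assigned.mp hs] at hplt
          exact lt_irrefl _ hplt
        by_cases hler : I.q c - I.qR c ≤ ((I.assigned μ c).filter
            fun t => I.prio c t < I.prio c s).card
        · have h3 := filter_maxSet_ge (I := I) (c := c) (x := I.prio c s) hler
          omega
        · apply hs'
          simp only [CJSA]
          apply Finset.mem_union_left
          apply Finset.mem_union_left
          simp only [jsaGen]
          refine mem_maxSet.mpr ⟨Finset.mem_insert_self _ _, ?_⟩
          rw [filter_insert_self (I := I)]
          omega
    · -- d = inr c
      rw [assigned_psiInv_inr, jsaAux_q_inr] at hmem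
      have haccs : I.acceptable s c := by
        simp only [acceptable, jsaAux_pref_inr, jsaAux_pref_none] at haccd
        simp only [acceptable]
        omega
      have hplt : I.pref s (some c) < I.pref s (μ s) := by
        rcases hm : μ s with _ | c₀
        · rw [psiInv_none hm] at hprefd
          simp only [jsaAux_pref_inr, jsaAux_pref_none] at hprefd
          omega
        · rw [psiInv_some hm] at hprefd
          split_ifs at hprefd with hg <;>
            simp only [jsaAux_pref_inl, jsaAux_pref_inr] at hprefd <;> omega
      have hs' := hstab s c haccs hplt
      have hsA : s ∉ I.assigned μ c := by
        intro hs
        rw [mem_assigned.mp hs] at hplt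
        exact lt_irrefl _ hplt
      have hlt : ((I.assigned μ c \ I.maxSet c (I.assigned μ c) (I.q c - I.qR c)).filter
          fun t => I.jsaAux.prio (Sum.inr c) t < I.jsaAux.prio (Sum.inr c) s).card
            < I.qR c := by
        have h1 := (mem_maxSet.mp hmem).2
        rwa [filter_insert_self (I := I.jsaAux)] at h1
      have hnG : s ∉ I.jsaGen c (insert s (I.assigned μ c)) := by
        intro h'
        exact hs' (Finset.mem_union_left _ (Finset.mem_union_left _ h'))
      have hA1 : I.q c - I.qR c ≤ ((I.assigned μ c).filter
          fun t => I.prio c t < I.prio c s).card := by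
        have h1 := card_le_of_not_mem_maxSet (Finset.mem_insert_self s _) hnG
        rwa [filter_insert_self (I := I)] at h1
      -- the general stage on `insert s A` selects exactly `Gc`
      have hGn : I.jsaGen c (insert s (I.assigned μ c))
          = I.maxSet c (I.assigned μ c) (I.q c - I.qR c) := by
        ext t
        simp only [jsaGen, mem_maxSet]
        constructor
        · rintro ⟨htT, hcard⟩
          rcases Finset.mem_insert.mp htT with rfl | htA
          · exfalso
            rw [filter_insert_self (I := I)] at hcard
            omega
          · refine ⟨htA, ?_⟩
            calc ((I.assigned μ c).filter fun u => I.prio c u < I.prio c t).card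
                ≤ ((insert s (I.assigned μ c)).filter fun u => I.prio c u < I.prio c t).card :=
                  Finset.card_le_card (Finset.filter_subset_filter _ (Finset.subset_insert _ _))
              _ < _ := hcard
        · rintro ⟨htA, hcard⟩
          refine ⟨Finset.mem_insert_of_mem htA, ?_⟩
          rw [Finset.filter_insert]
          split_ifs with hst
          · rw [Finset.card_insert_of_notMem (fun hs'' => hsA (Finset.filter_subset _ _ hs''))]
            by_contra hbad
            push_neg at hbad
            have hsub2 : (I.assigned μ c).filter (fun u => I.prio c u < I.prio c s)
                ⊆ (I.assigned μ c).filter (fun u => I.prio c u < I.prio c t) := by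
              intro u hu
              obtain ⟨hu1, hu2⟩ := Finset.mem_filter.mp hu
              exact Finset.mem_filter.mpr ⟨hu1, hu2.trans hst⟩
            have h5 := Finset.card_le_card hsub2
            omega
          · exact hcard
      by_cases hsdis : s ∈ I.dis
      · -- s disadvantaged: contradiction with the reserved stage
        have hnR : s ∉ I.jsaRes c (insert s (I.assigned μ c)) := by
          intro h'
          exact hs' (Finset.mem_union_left _ (Finset.mem_union_right _ h'))
        simp only [jsaRes, hGn] at hnR
        have hsU : s ∈ (insert s (I.assigned μ c) ∩ I.dis)
            \ I.maxSet c (I.assigned μ c) (I.q c - I.qR c) :=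
          Finset.mem_sdiff.mpr ⟨Finset.mem_inter.mpr ⟨Finset.mem_insert_self _ _, hsdis⟩,
            fun h' => hsA (maxSet_subset h')⟩
        have h2 := card_le_of_not_mem_maxSet hsU hnR
        have hsub3 : ((insert s (I.assigned μ c) ∩ I.dis)
              \ I.maxSet c (I.assigned μ c) (I.q c - I.qR c)).filter
                (fun t => I.prio c t < I.prio c s)
            ⊆ (I.assigned μ c \ I.maxSet c (I.assigned μ c) (I.q c - I.qR c)).filter
                fun t => I.jsaAux.prio (Sum.inr c) t < I.jsaAux.prio (Sum.inr c) s := by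
          intro t ht
          obtain ⟨ht1, ht2⟩ := Finset.mem_filter.mp ht
          obtain ⟨ht3, ht4⟩ := Finset.mem_sdiff.mp ht1
          obtain ⟨ht5, ht6⟩ := Finset.mem_inter.mp ht3
          have htA : t ∈ I.assigned μ c := by
            rcases Finset.mem_insert.mp ht5 with rfl | h'
            · omega
            · exact h'
          refine Finset.mem_filter.mpr ⟨Finset.mem_sdiff.mpr ⟨htA, ht4⟩, ?_⟩
          rw [jsaAux_prio_inr, jsaAux_prio_inr, if_pos ht6, if_pos hsdis]
          exact ht2
        have h3 := Finset.card_le_card hsub3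
        omega
      · -- s advantaged
        have hU : (insert s (I.assigned μ c) ∩ I.dis)
              \ I.maxSet c (I.assigned μ c) (I.q c - I.qR c)
            = (I.assigned μ c \ I.maxSet c (I.assigned μ c) (I.q c - I.qR c)).filter
                (fun t => t ∈ I.dis) := by
          ext t
          constructor
          · intro ht
            obtain ⟨ht1, ht2⟩ := Finset.mem_sdiff.mp ht
            obtain ⟨ht3, ht4⟩ := Finset.mem_inter.mp ht1
            rcases Finset.mem_insert.mp ht3 with rfl | h'
            · exact absurd ht4 hsdis
            · exact Finset.mem_filter.mpr ⟨Finset.mem_sdiff.mpr ⟨h', ht2⟩, ht4⟩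
          · intro ht
            obtain ⟨ht1, ht2⟩ := Finset.mem_filter.mp ht
            obtain ⟨ht3, ht4⟩ := Finset.mem_sdiff.mp ht1
            exact Finset.mem_sdiff.mpr
              ⟨Finset.mem_inter.mpr ⟨Finset.mem_insert_of_mem ht3, ht2⟩, ht4⟩
        -- the disadvantaged part of Rc is small
        have hRdsub : (I.assigned μ c \ I.maxSet c (I.assigned μ c) (I.q c - I.qR c)).filter
              (fun t => t ∈ I.dis)
            ⊆ (I.assigned μ c \ I.maxSet c (I.assigned μ c) (I.q c - I.qR c)).filter
                fun t => I.jsaAux.prio (Sum.inr c) t < I.jsaAux.prio (Sum.inr c) s := by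
          intro t ht
          obtain ⟨ht1, ht2⟩ := Finset.mem_filter.mp ht
          refine Finset.mem_filter.mpr ⟨ht1, ?_⟩
          rw [jsaAux_prio_inr, jsaAux_prio_inr, if_pos ht2, if_neg hsdis]
          have h4 := prio_le_sup I c t
          omega
        have hRdcard := Finset.card_le_card hRdsub
        have hRes : I.jsaRes c (insert s (I.assigned μ c))
            = (I.assigned μ c \ I.maxSet c (I.assigned μ c) (I.q c - I.qR c)).filter
                (fun t => t ∈ I.dis) := by
          simp only [jsaRes, hGn, hU]
          exact maxSet_eq_self (by omega)
        have hn3 : s ∉ I.maxSet c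
            (insert s (I.assigned μ c)
              \ (I.maxSet c (I.assigned μ c) (I.q c - I.qR c)
                ∪ (I.assigned μ c \ I.maxSet c (I.assigned μ c) (I.q c - I.qR c)).filter
                    (fun t => t ∈ I.dis)))
            (I.q c - ((I.maxSet c (I.assigned μ c) (I.q c - I.qR c)
                ∪ (I.assigned μ c \ I.maxSet c (I.assigned μ c) (I.q c - I.qR c)).filter
                    (fun t => t ∈ I.dis))).card) := by
          intro h'
          apply hs'
          simp only [CJSA, hGn, hRes]
          exact Finset.mem_union_right _ h'
        have hsT : s ∈ insert s (I.assigned μ c)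
            \ (I.maxSet c (I.assigned μ c) (I.q c - I.qR c)
              ∪ (I.assigned μ c \ I.maxSet c (I.assigned μ c) (I.q c - I.qR c)).filter
                  (fun t => t ∈ I.dis)) := by
          refine Finset.mem_sdiff.mpr ⟨Finset.mem_insert_self _ _, ?_⟩
          intro h'
          rcases Finset.mem_union.mp h' with h' | h'
          · exact hsA (maxSet_subset h')
          · exact hsA (Finset.mem_sdiff.mp (Finset.filter_subset _ _ h')).1
        have h3 := card_le_of_not_mem_maxSet hsT hn3
        -- bound the third-stage competitors by the advantaged part of Rc that beats s
        have hsub5 : ((insert s (I.assigned μ c)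
              \ (I.maxSet c (I.assigned μ c) (I.q c - I.qR c)
                ∪ (I.assigned μ c \ I.maxSet c (I.assigned μ c) (I.q c - I.qR c)).filter
                    (fun t => t ∈ I.dis))).filter fun t => I.prio c t < I.prio c s)
            ⊆ (I.assigned μ c \ I.maxSet c (I.assigned μ c) (I.q c - I.qR c)).filter
                (fun t => t ∉ I.dis ∧ I.prio c t < I.prio c s) := by
          intro t ht
          obtain ⟨ht1, ht2⟩ := Finset.mem_filter.mp ht
          obtain ⟨ht3, ht4⟩ := Finset.mem_sdiff.mp ht1
          have htA : t ∈ I.assigned μ c := by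
            rcases Finset.mem_insert.mp ht3 with rfl | h'
            · omega
            · exact h'
          have htG : t ∉ I.maxSet c (I.assigned μ c) (I.q c - I.qR c) :=
            fun h' => ht4 (Finset.mem_union_left _ h')
          have htd : t ∉ I.dis := by
            intro h'
            exact ht4 (Finset.mem_union_right _
              (Finset.mem_filter.mpr ⟨Finset.mem_sdiff.mpr ⟨htA, htG⟩, h'⟩))
          exact Finset.mem_filter.mpr ⟨Finset.mem_sdiff.mpr ⟨htA, htG⟩, htd, ht2⟩
        have h6 := Finset.card_le_card hsub5
        -- the advantaged beaters and the disadvantaged part are disjoint pieces of hlt's filter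
        have hsub6 : ((I.assigned μ c \ I.maxSet c (I.assigned μ c) (I.q c - I.qR c)).filter
              (fun t => t ∈ I.dis))
            ∪ ((I.assigned μ c \ I.maxSet c (I.assigned μ c) (I.q c - I.qR c)).filter
                (fun t => t ∉ I.dis ∧ I.prio c t < I.prio c s))
            ⊆ (I.assigned μ c \ I.maxSet c (I.assigned μ c) (I.q c - I.qR c)).filter
                fun t => I.jsaAux.prio (Sum.inr c) t < I.jsaAux.prio (Sum.inr c) s := by
          intro t ht
          rcases Finset.mem_union.mp ht with ht | ht
          · exact hRdsub ht
          · obtain ⟨ht1, ht2, ht3⟩ := Finset.mem_filter.mp ht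
            refine Finset.mem_filter.mpr ⟨ht1, ?_⟩
            rw [jsaAux_prio_inr, jsaAux_prio_inr, if_neg ht2, if_neg hsdis]
            omega
        have hdisj6 : Disjoint ((I.assigned μ c \ I.maxSet c (I.assigned μ c)
              (I.q c - I.qR c)).filter (fun t => t ∈ I.dis))
            ((I.assigned μ c \ I.maxSet c (I.assigned μ c) (I.q c - I.qR c)).filter
              (fun t => t ∉ I.dis ∧ I.prio c t < I.prio c s)) := by
          rw [Finset.disjoint_left]
          intro a ha hb
          exact (Finset.mem_filter.mp hb).2.1 (Finset.mem_filter.mp ha).2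
        have h7 : ((I.assigned μ c \ I.maxSet c (I.assigned μ c) (I.q c - I.qR c)).filter
              (fun t => t ∈ I.dis)).card
            + ((I.assigned μ c \ I.maxSet c (I.assigned μ c) (I.q c - I.qR c)).filter
                (fun t => t ∉ I.dis ∧ I.prio c t < I.prio c s)).card < I.qR c := by
          have := Finset.card_le_card hsub6
          rw [← Finset.card_union_of_disjoint hdisj6]
          omega
        -- |Gc| = q - qR
        have hGfull : (I.maxSet c (I.assigned μ c) (I.q c - I.qR c)).card
            = I.q c - I.qR c := by
          have h8 : I.q c - I.qR c ≤ (I.assigned μ c).card := by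
            have := Finset.card_le_card
              ((I.assigned μ c).filter_subset fun t => I.prio c t < I.prio c s)
            omega
          have h9 := le_card_maxSet (I := I) (c := c) (T := I.assigned μ c) h8
          have h10 := card_maxSet_le (I := I) (c := c) (T := I.assigned μ c)
            (k := I.q c - I.qR c)
          omega
        have hdisjGRd : Disjoint (I.maxSet c (I.assigned μ c) (I.q c - I.qR c))
            ((I.assigned μ c \ I.maxSet c (I.assigned μ c) (I.q c - I.qR c)).filter
              (fun t => t ∈ I.dis)) := by
          rw [Finset.disjoint_left]
          intro a ha hb
          exact (Finset.mem_sdiff.mp (Finset.filter_subset _ _ hb)).2 ha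
        rw [Finset.card_union_of_disjoint hdisjGRd, hGfull] at h3
        have hqr := I.qR_le c
        omega

end SchoolChoice
/-- the joint-seat-allocation assignment equals the projection of the
student-optimal stable matching of the JSA auxiliary instance. -/
theorem JSA_aux_equivalence {S C : Type*} [Fintype S] [DecidableEq S] [Fintype C] [DecidableEq C]
    (I : SchoolChoice S C) (μJ : S → Option C) (μA : S → Option (C ⊕ C))
    (hJ : I.IsOptStable I.CJSA μJ)
    (hA : I.jsaAux.IsOptStable I.jsaAux.CBASE μA) :
    ∀ s : S, μJ s = (μA s).map (Sum.elim id id) := by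
  intro s
  obtain ⟨hJs, hJopt⟩ := hJ
  obtain ⟨hAs, hAopt⟩ := hA
  have hproj := I.isStable_proj hAs
  have hpsi := I.isStable_psiInv hJs
  have h1 : I.pref s (μJ s) ≤ I.pref s ((μA s).map (Sum.elim id id)) :=
    hJopt _ hproj s
  have h2 : I.jsaAux.pref s (μA s) ≤ I.jsaAux.pref s (I.psiInv μJ s) := hAopt _ hpsi s
  have h3 : 2 * I.pref s ((μA s).map (Sum.elim id id)) ≤ I.jsaAux.pref s (μA s) := by
    rcases hm : μA s with _ | (a | b) <;>
      simp [SchoolChoice.jsaAux_pref_none, SchoolChoice.jsaAux_pref_inl, SchoolChoice.jsaAux_pref_inr]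
  have h4 : I.jsaAux.pref s (I.psiInv μJ s) ≤ 2 * I.pref s (μJ s) + 1 := by
    rcases hm : μJ s with _ | c
    · rw [SchoolChoice.psiInv_none hm]
      simp [SchoolChoice.jsaAux_pref_none]
    · rw [SchoolChoice.psiInv_some hm]
      split_ifs with hg <;> simp [SchoolChoice.jsaAux_pref_inl, SchoolChoice.jsaAux_pref_inr]
  have h5 : I.pref s (μJ s) = I.pref s ((μA s).map (Sum.elim id id)) := by omega
  exact I.pref_inj s h5
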